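/- Let (R, m) be a Noetherian local ring, M a finitely generated R-module, and x ∈ m a non-zerodivisor on R. If x annihilates the functor Ext_R^{k+1}(M, ·) for a fixed k > 0 (i.e., x·Ext_R^{k+1}(M, N) = 0 for every R-module N), then x annihilates Ext_R^{j+1}(M, ·) for all j ≥ k. -/

import Mathlib

open CategoryTheory

noncomputable section Stmt4Aux

variable {R : Type} [CommRing R]

/-- Postcomposition map between `linearYonedaObj` cochain complexes. -/
def homCplxMap (P : ChainComplex (ModuleCat R) ℕ) {N N' : ModuleCat R} (φ : N ⟶ N') :
    P.linearYonedaObj R N ⟶ P.linearYonedaObj R N' where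
  f n := ModuleCat.ofHom (Linear.rightComp R _ φ)
  comm' i j hij := by
    ext f
    show P.d j i ≫ ((f : P.X i ⟶ N) ≫ φ) = (P.d j i ≫ (f : P.X i ⟶ N)) ≫ φ
    exact (Category.assoc _ _ _).symm

lemma smul_zero_of_iso {A B : ModuleCat R} (φ : A ≅ B) (x : R) (a : A)
    (h : x • (φ.hom a) = 0) : x • a = 0 := by
  have h1 : φ.hom (x • a) = 0 := by rw [map_smul]; exact h
  have h2 := congrArg (fun (f : A ⟶ A) => f (x • a)) φ.hom_inv_id
  simp only [ConcreteCategory.comp_apply, ModuleCat.id_apply] at h2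
  rw [← h2, h1, map_zero]

lemma elem_zero_of_isZero {A : ModuleCat R} (h : Limits.IsZero A) (a : A) : a = 0 := by
  have h1 : (𝟙 A : A ⟶ A) = 0 := h.eq_of_src _ _
  have h2 := congrArg (fun (f : A ⟶ A) => f a) h1
  simpa using h2

/-- The complex `Hom(P, I)` is exact in positive degrees when `P` is a projective
resolution and `I` is injective. -/
lemma isZero_homology_linearYonedaObj_injective {Z : ModuleCat R}
    (P : ProjectiveResolution Z) (I : ModuleCat R) [Injective I] (n : ℕ) :
    Limits.IsZero ((P.complex.linearYonedaObj R I).homology (n + 1)) := by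
  rw [← HomologicalComplex.exactAt_iff_isZero_homology]
  rw [HomologicalComplex.exactAt_iff' _ n (n + 1) (n + 2) (by simp) (by simp)]
  rw [ShortComplex.moduleCat_exact_iff]
  intro (g : P.complex.X (n + 1) ⟶ I) hg
  -- hg : Hom-complex differential sends g to 0, i.e. `P.d (n+2) (n+1) ≫ g = 0`
  have hg' : P.complex.d (n + 2) (n + 1) ≫ g = 0 := hg
  set dd : P.complex.X (n + 1) ⟶ P.complex.X n := P.complex.d (n + 1) n with hdd
  have hexact := P.exact_succ n
  rw [ShortComplex.moduleCat_exact_iff] at hexact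
  have hker : LinearMap.ker dd.hom ≤ LinearMap.ker g.hom := by
    intro y hy
    obtain ⟨z, hz⟩ := hexact y hy
    have : g (P.complex.d (n + 2) (n + 1) z) = 0 := by
      have := congrArg (fun (f : P.complex.X (n + 2) ⟶ I) => f z) hg'
      simpa using this
    simpa [hz] using this
  set gbar := Submodule.liftQ (LinearMap.ker dd.hom) g.hom hker
  set e := LinearMap.quotKerEquivRange dd.hom
  set hmap : ModuleCat.of R (LinearMap.range dd.hom) ⟶ I :=
    ModuleCat.ofHom <| gbar ∘ₗ e.symm.toLinearMap
  set m : ModuleCat.of R (LinearMap.range dd.hom) ⟶ P.complex.X n :=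
    ModuleCat.ofHom (LinearMap.range dd.hom).subtype
  have : Mono m := (ModuleCat.mono_iff_injective m).mpr (Submodule.injective_subtype _)
  refine ⟨Injective.factorThru hmap m, ?_⟩
  have hfac : m ≫ Injective.factorThru hmap m = hmap := Injective.comp_factorThru hmap m
  show dd ≫ Injective.factorThru hmap m = g
  ext y
  set yy : LinearMap.range dd.hom := ⟨dd y, ⟨y, rfl⟩⟩ with hyy
  have h1 : dd y = m yy := rfl
  show Injective.factorThru hmap m (dd y) = g y
  rw [h1]
  have h2 : (Injective.factorThru hmap m) (m yy) = hmap yy := LinearMap.congr_fun (congrArg ModuleCat.Hom.hom hfac) yy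
  show (Injective.factorThru hmap m) (m yy) = g y
  rw [h2]
  show gbar (e.symm yy) = g y
  have h3 : e.symm yy = Submodule.Quotient.mk y := by
    rw [LinearEquiv.symm_apply_eq]
    rfl
  rw [h3]
  rfl

lemma ext_succ_smul_zero (M : ModuleCat R) (x : R) (n : ℕ)
    (ih : ∀ N : ModuleCat R,
      ∀ e : ((Ext R (ModuleCat R) (n + 1)).obj (Opposite.op M)).obj N, x • e = 0) :
    ∀ N : ModuleCat R,
      ∀ e : ((Ext R (ModuleCat R) (n + 2)).obj (Opposite.op M)).obj N, x • e = 0 := by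
  intro N e
  obtain ⟨P⟩ : Nonempty (ProjectiveResolution M) := HasProjectiveResolution.out
  set I := Injective.under N with hI
  set ι : N ⟶ I := Injective.ι N with hι
  have hιinj : Function.Injective ι.hom :=
    (ModuleCat.mono_iff_injective ι).mp inferInstance
  set Cq : ModuleCat R := ModuleCat.of R (I ⧸ LinearMap.range ι.hom) with hCq
  set π : I ⟶ Cq := ModuleCat.ofHom (LinearMap.range ι.hom).mkQ with hπ
  have hιπ : ι ≫ π = 0 := by
    apply ModuleCat.hom_ext
    apply LinearMap.ext
    intro a
    show π (ι a) = 0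
    exact (Submodule.Quotient.mk_eq_zero _).mpr ⟨a, rfl⟩
  have hzero : homCplxMap P.complex ι ≫ homCplxMap P.complex π = 0 := by
    have : homCplxMap P.complex ι ≫ homCplxMap P.complex π
        = homCplxMap P.complex (ι ≫ π) := rfl
    rw [this, hιπ]
    apply HomologicalComplex.hom_ext
    intro i
    apply ModuleCat.hom_ext
    apply LinearMap.ext
    intro f
    show (f : P.complex.X i ⟶ N) ≫ (0 : N ⟶ Cq) = 0
    exact Limits.comp_zero
  set T : ShortComplex (CochainComplex (ModuleCat R) ℕ) :=
    ShortComplex.mk (homCplxMap P.complex ι) (homCplxMap P.complex π) hzero with hT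
  have hTse : T.ShortExact := by
    apply HomologicalComplex.shortExact_of_degreewise_shortExact
    intro i
    haveI hm : Mono (T.map (HomologicalComplex.eval (ModuleCat R) (ComplexShape.up ℕ) i)).f := by
      refine (ModuleCat.mono_iff_injective _).mpr ?_
      intro f1 f2 h12
      exact ModuleCat.hom_ext (LinearMap.ext fun a => hιinj (LinearMap.congr_fun (congrArg ModuleCat.Hom.hom h12) a))
    haveI he : Epi (T.map (HomologicalComplex.eval (ModuleCat R) (ComplexShape.up ℕ) i)).g := by
      refine (ModuleCat.epi_iff_surjective _).mpr ?_
      intro (g : P.complex.X i ⟶ Cq)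
      have hπepi : Epi π :=
        (ModuleCat.epi_iff_surjective π).mpr (Submodule.mkQ_surjective _)
      obtain ⟨h', hh⟩ := Projective.factors g π
      exact ⟨h', hh⟩
    refine ⟨?_⟩
    · rw [ShortComplex.moduleCat_exact_iff]
      intro (g : P.complex.X i ⟶ I) hg
      have hmem : ∀ a, g a ∈ LinearMap.range ι.hom := by
        intro a
        have h0 : π (g a) = 0 := LinearMap.congr_fun (congrArg ModuleCat.Hom.hom hg) a
        exact (Submodule.Quotient.mk_eq_zero _).mp h0
      refine ⟨ModuleCat.ofHom ((LinearEquiv.ofInjective ι.hom hιinj).symm.toLinearMap ∘ₗ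
        LinearMap.codRestrict _ g.hom hmem), ?_⟩
      apply ModuleCat.hom_ext
      apply LinearMap.ext
      intro a
      show ι ((LinearEquiv.ofInjective ι.hom hιinj).symm ⟨g a, hmem a⟩) = g a
      calc ι ((LinearEquiv.ofInjective ι.hom hιinj).symm ⟨g a, hmem a⟩)
          = ((LinearEquiv.ofInjective ι.hom hιinj)
              ((LinearEquiv.ofInjective ι.hom hιinj).symm ⟨g a, hmem a⟩) : I) :=
            (LinearEquiv.ofInjective_apply _ _).symm
        _ = g a := by rw [LinearEquiv.apply_symm_apply]
  have hrel : (ComplexShape.up ℕ).Rel (n + 1) (n + 2) := rfl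
  have hex := hTse.homology_exact₁ (n + 1) (n + 2) hrel
  rw [ShortComplex.moduleCat_exact_iff] at hex
  set φ := P.isoExt (R := R) (n + 2) N with hφ
  apply smul_zero_of_iso φ x e
  have hz : HomologicalComplex.homologyMap T.f (n + 2) (φ.hom e) = 0 :=
    elem_zero_of_isZero (isZero_homology_linearYonedaObj_injective P I (n + 1)) _
  obtain ⟨c, hc⟩ := hex (φ.hom e) hz
  have hxc : x • c = 0 :=
    smul_zero_of_iso (P.isoExt (R := R) (n + 1) Cq).symm x c (ih Cq ((P.isoExt (R := R) (n + 1) Cq).inv c))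
  rw [← hc, ← map_smul, hxc, map_zero]


end Stmt4Aux

theorem stmt4 (R : Type) [CommRing R] [IsNoetherianRing R] [IsLocalRing R]
    (M : Type) [AddCommGroup M] [Module R M] [Module.Finite R M]
    (x : R) (hxm : x ∈ IsLocalRing.maximalIdeal R) (hx : x ∈ nonZeroDivisors R)
    (k : ℕ) (hk : 0 < k)
    (h : ∀ N : ModuleCat R,
      ∀ e : ((Ext R (ModuleCat R) (k + 1)).obj (Opposite.op (ModuleCat.of R M))).obj N,
        x • e = 0) :
    ∀ j : ℕ, k ≤ j → ∀ N : ModuleCat R,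
      ∀ e : ((Ext R (ModuleCat R) (j + 1)).obj (Opposite.op (ModuleCat.of R M))).obj N,
        x • e = 0 := by
  intro j hj
  induction j, hj using Nat.le_induction with
  | base => exact h
  | succ j hj ih => exact ext_succ_smul_zero (ModuleCat.of R M) x j ih
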